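/- Let Σ = ℕ^ℕ with the one-sided shift σ, let μ be a σ-invariant Borel probability on Σ admitting a Jacobian Jσ, and let Σ̂ = ℕ^ℤ with the two-sided shift σ̂. Let μ̂ be a σ̂-invariant Borel probability on Σ̂ with P_*μ̂ = μ, and let x ↦ μ̂_x be a disintegration of μ̂ over μ along P: a family of Borel probabilities on Σ (the past space, via S) such that (h_*μ̂)(E) = ∫_Σ μ̂_x({s ∈ Σ : (s,x) ∈ E}) dμ(x) for every Borel set E ⊆ Σ × Σ. Then for μ-almost every x ∈ Σ the following holds for every n ≥ 1 and every word v = (v_0,…,v_{n−1}) ∈ ℕ^n: μ̂_x({s ∈ Σ : s(k) = v_k for all 0 ≤ k < n}) = 1/Jσ^n(x^n), where x^n ∈ Σ is defined by x^n(j) = v_{n−1−j} for 0 ≤ j < n and x^n(j) = x(j−n) for j ≥ n. -/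

import Mathlib

open MeasureTheory

/-- The one-sided shift on `Σ = ℕ^ℕ`. -/
def shiftMap : (ℕ → ℕ) → (ℕ → ℕ) := fun x n => x (n + 1)

/-- `Jσ^n(z) = ∏_{i<n} Jσ(σ^i z)`. -/
def jprod (J : (ℕ → ℕ) → ℝ) (n : ℕ) (z : ℕ → ℕ) : ℝ :=
  ∏ i ∈ Finset.range n, J (shiftMap^[i] z)

/-- The future projection `P : ℕ^ℤ → ℕ^ℕ`, `(P x̂)(n) = x̂(n)`. -/
def futureProj : (ℤ → ℕ) → (ℕ → ℕ) := fun x n => x (n : ℤ)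

/-- The past projection `S : ℕ^ℤ → ℕ^ℕ`, `(S x̂)(n) = x̂(−1−n)`. -/
def pastProj : (ℤ → ℕ) → (ℕ → ℕ) := fun x n => x (-1 - (n : ℤ))

/-- The homeomorphism `h = (S, P) : ℕ^ℤ → ℕ^ℕ × ℕ^ℕ`. -/
def pastFuture : (ℤ → ℕ) → (ℕ → ℕ) × (ℕ → ℕ) := fun x => (pastProj x, futureProj x)

/-- The two-sided shift on `Σ̂ = ℕ^ℤ`. -/
def shiftMap2 : (ℤ → ℕ) → (ℤ → ℕ) := fun x n => x (n + 1)

/-- `x^n`: prepend the reversal of a word `v` of length `n` to `x`. -/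
def prependWord {n : ℕ} (v : Fin n → ℕ) (x : ℕ → ℕ) : ℕ → ℕ :=
  fun j => if h : j < n then v ⟨n - 1 - j, by omega⟩ else x (j - n)

-- auxiliary
def consMap (ι : ℕ) (x : ℕ → ℕ) : ℕ → ℕ := fun j => if j = 0 then ι else x (j - 1)

def preMap {n : ℕ} (w : Fin n → ℕ) (x : ℕ → ℕ) : ℕ → ℕ :=
  fun j => if h : j < n then w ⟨j, h⟩ else x (j - n)

def cylSet {n : ℕ} (w : Fin n → ℕ) : Set (ℕ → ℕ) := {y | ∀ k : Fin n, y (k : ℕ) = w k}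

lemma shift_cons (ι : ℕ) (x : ℕ → ℕ) : shiftMap (consMap ι x) = x := by
  funext m; simp [shiftMap, consMap]

lemma cons_eq_self {ι : ℕ} {y : ℕ → ℕ} (h : y 0 = ι) : consMap ι (shiftMap y) = y := by
  funext m; cases m with
  | zero => simpa [consMap] using h.symm
  | succ m => simp [consMap, shiftMap]

lemma measurable_shiftMap : Measurable shiftMap :=
  measurable_pi_lambda _ fun n => measurable_pi_apply _

lemma measurable_consMap (ι : ℕ) : Measurable (consMap ι) := by
  apply measurable_pi_lambda
  intro j
  unfold consMap
  split
  · exact measurable_const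
  · exact measurable_pi_apply _

lemma measurable_preMap {n : ℕ} (w : Fin n → ℕ) : Measurable (preMap w) := by
  apply measurable_pi_lambda
  intro j
  unfold preMap
  split
  · exact measurable_const
  · exact measurable_pi_apply _

lemma measurable_futureProj : Measurable futureProj :=
  measurable_pi_lambda _ fun n => measurable_pi_apply _

lemma measurable_pastProj : Measurable pastProj :=
  measurable_pi_lambda _ fun n => measurable_pi_apply _

lemma measurable_pastFuture : Measurable pastFuture :=
  measurable_pastProj.prodMk measurable_futureProj

lemma measurableSet_cylSet {n : ℕ} (w : Fin n → ℕ) : MeasurableSet (cylSet w) := by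
  have : cylSet w = ⋂ k : Fin n, (fun y : ℕ → ℕ => y (k : ℕ)) ⁻¹' {w k} := by
    ext y; simp [cylSet]
  rw [this]
  exact MeasurableSet.iInter fun k => (measurable_pi_apply _) (measurableSet_singleton _)

lemma measurableSet_zeroCyl (ι : ℕ) : MeasurableSet {y : ℕ → ℕ | y 0 = ι} := by
  have : {y : ℕ → ℕ | y 0 = ι} = (fun y : ℕ → ℕ => y 0) ⁻¹' {ι} := by ext y; simp
  rw [this]
  exact (measurable_pi_apply 0) (measurableSet_singleton ι)

lemma shift_iter_apply (n : ℕ) (x : ℕ → ℕ) (m : ℕ) : shiftMap^[n] x m = x (m + n) := by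
  induction n generalizing x with
  | zero => rfl
  | succ k ih =>
    rw [Function.iterate_succ_apply, ih (shiftMap x)]
    simp only [shiftMap]
    congr 1

lemma shift2_iter_apply (n : ℕ) (x : ℤ → ℕ) (m : ℤ) : shiftMap2^[n] x m = x (m + n) := by
  induction n generalizing x with
  | zero => simp
  | succ k ih =>
    rw [Function.iterate_succ_apply, ih (shiftMap2 x)]
    simp only [shiftMap2]
    congr 1; push_cast; ring

lemma shift_pre {n : ℕ} (w : Fin (n+1) → ℕ) (x : ℕ → ℕ) :
    shiftMap (preMap w x) = preMap (fun k : Fin n => w k.succ) x := by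
  funext m
  simp only [shiftMap, preMap]
  by_cases h : m < n
  · rw [dif_pos (by omega : m + 1 < n + 1), dif_pos h]
    congr 1
  · rw [dif_neg (by omega), dif_neg h]
    congr 1; omega

lemma cons_pre {n : ℕ} (w : Fin (n+1) → ℕ) (x : ℕ → ℕ) :
    consMap (w 0) (preMap (fun k : Fin n => w k.succ) x) = preMap w x := by
  funext m
  cases m with
  | zero => simp [consMap, preMap]
  | succ m =>
    simp only [consMap, preMap, Nat.succ_ne_zero, if_false, Nat.add_sub_cancel]
    by_cases h : m < n
    · rw [dif_pos h, dif_pos (by omega : m + 1 < n + 1)]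
      congr 1
    · rw [dif_neg h, dif_neg (by omega)]
      congr 1
      omega

lemma shift_iter_pre {n : ℕ} (w : Fin n → ℕ) (x : ℕ → ℕ) :
    shiftMap^[n] (preMap w x) = x := by
  funext m
  rw [shift_iter_apply]
  simp only [preMap]
  rw [dif_neg (by omega)]
  congr 1; omega

lemma preMap_zero (w : Fin 0 → ℕ) (x : ℕ → ℕ) : preMap w x = x := by
  funext m; simp [preMap]

lemma preMap_eq_prepend {n : ℕ} (v : Fin n → ℕ) (x : ℕ → ℕ) :
    preMap (fun j : Fin n => v ⟨n - 1 - (j : ℕ), by omega⟩) x = prependWord v x := by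
  funext m
  simp only [preMap, prependWord]

open ENNReal in
lemma jac_measure_eq (μ : Measure (ℕ → ℕ)) (J : (ℕ → ℕ) → ℝ)
    (hJac : ∀ (ι : ℕ) (B : Set (ℕ → ℕ)), MeasurableSet B →
      μ B = ∫⁻ x in {y : ℕ → ℕ | y 0 = ι} ∩ shiftMap ⁻¹' B, ENNReal.ofReal (J x) ∂μ)
    (ι : ℕ) :
    μ = Measure.map shiftMap
      ((μ.withDensity (fun y => ENNReal.ofReal (J y))).restrict {y | y 0 = ι}) := by
  ext B hB
  rw [Measure.map_apply measurable_shiftMap hB,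
    Measure.restrict_apply (measurable_shiftMap hB),
    withDensity_apply _ ((measurable_shiftMap hB).inter (measurableSet_zeroCyl ι)),
    Set.inter_comm]
  exact hJac ι B hB

lemma one_step (μ : Measure (ℕ → ℕ)) (J : (ℕ → ℕ) → ℝ) (hJmeas : Measurable J)
    (hJpos : ∀ x, 0 < J x)
    (hJac : ∀ (ι : ℕ) (B : Set (ℕ → ℕ)), MeasurableSet B →
      μ B = ∫⁻ x in {y : ℕ → ℕ | y 0 = ι} ∩ shiftMap ⁻¹' B, ENNReal.ofReal (J x) ∂μ)
    (ι : ℕ) (F : (ℕ → ℕ) → ENNReal) (hF : Measurable F) :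
    ∫⁻ y in {y | y 0 = ι}, F y ∂μ
      = ∫⁻ x, F (consMap ι x) * (ENNReal.ofReal (J (consMap ι x)))⁻¹ ∂μ := by
  have hG : Measurable fun x => F (consMap ι x) * (ENNReal.ofReal (J (consMap ι x)))⁻¹ :=
    ((hF.comp (measurable_consMap ι)).mul
      ((hJmeas.comp (measurable_consMap ι)).ennreal_ofReal.inv))
  conv_rhs => rw [jac_measure_eq μ J hJac ι]
  rw [lintegral_map hG measurable_shiftMap,
    restrict_withDensity (measurableSet_zeroCyl ι),
    lintegral_withDensity_eq_lintegral_mul _ hJmeas.ennreal_ofReal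
      (show Measurable fun a => F (consMap ι (shiftMap a)) * (ENNReal.ofReal (J (consMap ι (shiftMap a))))⁻¹
        from hG.comp measurable_shiftMap)]
  apply setLIntegral_congr_fun (measurableSet_zeroCyl ι)
  intro y hy
  simp only [Pi.mul_apply, Function.comp_apply]
  rw [cons_eq_self hy]
  rw [← mul_assoc, mul_comm (ENNReal.ofReal (J y)) (F y), mul_assoc,
    ENNReal.mul_inv_cancel, mul_one]
  · exact (ENNReal.ofReal_pos.2 (hJpos y)).ne'
  · exact ENNReal.ofReal_ne_top

lemma jprod_succ (J : (ℕ → ℕ) → ℝ) (n : ℕ) (z : ℕ → ℕ) :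
    jprod J (n+1) z = jprod J n (shiftMap z) * J z := by
  unfold jprod
  rw [Finset.prod_range_succ']
  simp only [Function.iterate_succ_apply, Function.iterate_zero_apply]

lemma jprod_nonneg (J : (ℕ → ℕ) → ℝ) (hJpos : ∀ x, 0 < J x) (n : ℕ) (z : ℕ → ℕ) :
    0 < jprod J n z :=
  Finset.prod_pos fun i _ => hJpos _

lemma n_step (μ : Measure (ℕ → ℕ)) (J : (ℕ → ℕ) → ℝ) (hJmeas : Measurable J)
    (hJpos : ∀ x, 0 < J x)
    (hJac : ∀ (ι : ℕ) (B : Set (ℕ → ℕ)), MeasurableSet B →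
      μ B = ∫⁻ x in {y : ℕ → ℕ | y 0 = ι} ∩ shiftMap ⁻¹' B, ENNReal.ofReal (J x) ∂μ) :
    ∀ (n : ℕ) (w : Fin n → ℕ) (F : (ℕ → ℕ) → ENNReal), Measurable F →
    ∫⁻ y in cylSet w, F y ∂μ
      = ∫⁻ x, F (preMap w x) * (ENNReal.ofReal (jprod J n (preMap w x)))⁻¹ ∂μ := by
  intro n
  induction n with
  | zero =>
    intro w F hF
    have h1 : cylSet w = Set.univ := by
      ext y; simp [cylSet]
    rw [h1, Measure.restrict_univ]
    apply lintegral_congr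
    intro x
    rw [preMap_zero]
    simp [jprod]
  | succ n ih =>
    intro w F hF
    set w' : Fin n → ℕ := fun k => w k.succ with hw'
    set t : Set (ℕ → ℕ) := shiftMap ⁻¹' (cylSet w') with htdef
    have ht : MeasurableSet t := measurable_shiftMap (measurableSet_cylSet w')
    have hcyl : cylSet w = t ∩ {y | y 0 = w 0} := by
      ext y
      simp only [cylSet, Set.mem_setOf_eq, Set.mem_inter_iff, Set.mem_preimage, htdef, hw',
        shiftMap]
      constructor
      · intro h
        refine ⟨fun k => ?_, h 0⟩
        have := h k.succ
        simpa [Fin.val_succ] using this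
      · rintro ⟨h, h0⟩ k
        cases k using Fin.cases with
        | zero => exact h0
        | succ j => simpa [Fin.val_succ] using h j
    have stepA : ∫⁻ y in cylSet w, F y ∂μ
        = ∫⁻ y in {y | y 0 = w 0}, t.indicator F y ∂μ := by
      rw [lintegral_indicator ht, Measure.restrict_restrict ht, hcyl]
    rw [stepA, one_step μ J hJmeas hJpos hJac (w 0) (t.indicator F) (hF.indicator ht)]
    have stepC : ∀ x : ℕ → ℕ,
        t.indicator F (consMap (w 0) x) * (ENNReal.ofReal (J (consMap (w 0) x)))⁻¹
          = (cylSet w').indicator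
              (fun z => F (consMap (w 0) z) * (ENNReal.ofReal (J (consMap (w 0) z)))⁻¹) x := by
      intro x
      by_cases hx : x ∈ cylSet w'
      · have hmem : consMap (w 0) x ∈ t := by
          simp only [htdef, Set.mem_preimage, shift_cons]; exact hx
        rw [Set.indicator_of_mem hmem, Set.indicator_of_mem hx]
      · have hmem : consMap (w 0) x ∉ t := by
          simp only [htdef, Set.mem_preimage, shift_cons]; exact hx
        rw [Set.indicator_of_notMem hmem, Set.indicator_of_notMem hx, zero_mul]
    have hF2 : Measurable fun z => F (consMap (w 0) z) * (ENNReal.ofReal (J (consMap (w 0) z)))⁻¹ := by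
      exact (hF.comp (measurable_consMap _)).mul
        ((hJmeas.comp (measurable_consMap _)).ennreal_ofReal.inv)
    rw [lintegral_congr stepC,
      lintegral_indicator (measurableSet_cylSet w'),
      ih w' (fun z => F (consMap (w 0) z) * (ENNReal.ofReal (J (consMap (w 0) z)))⁻¹) hF2]
    apply lintegral_congr
    intro x
    rw [cons_pre w x]
    have hj : ENNReal.ofReal (jprod J (n+1) (preMap w x))
        = ENNReal.ofReal (jprod J n (preMap w' x)) * ENNReal.ofReal (J (preMap w x)) := by
      rw [jprod_succ, shift_pre, ENNReal.ofReal_mul (jprod_nonneg J hJpos n _).le]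
    rw [hj, ENNReal.mul_inv (Or.inr ENNReal.ofReal_ne_top) (Or.inl ENNReal.ofReal_ne_top)]
    ring

lemma cyl_shift_measure (μ : Measure (ℕ → ℕ)) (J : (ℕ → ℕ) → ℝ) (hJmeas : Measurable J)
    (hJpos : ∀ x, 0 < J x)
    (hJac : ∀ (ι : ℕ) (B : Set (ℕ → ℕ)), MeasurableSet B →
      μ B = ∫⁻ x in {y : ℕ → ℕ | y 0 = ι} ∩ shiftMap ⁻¹' B, ENNReal.ofReal (J x) ∂μ)
    (n : ℕ) (w : Fin n → ℕ) (B : Set (ℕ → ℕ)) (hB : MeasurableSet B) :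
    μ (cylSet w ∩ shiftMap^[n] ⁻¹' B)
      = ∫⁻ x in B, (ENNReal.ofReal (jprod J n (preMap w x)))⁻¹ ∂μ := by
  have hmn : Measurable (shiftMap^[n]) := measurable_shiftMap.iterate n
  have hms : MeasurableSet (shiftMap^[n] ⁻¹' B) := hmn hB
  have h1 : μ (cylSet w ∩ shiftMap^[n] ⁻¹' B)
      = ∫⁻ y in cylSet w, (shiftMap^[n] ⁻¹' B).indicator (fun _ => 1) y ∂μ := by
    rw [lintegral_indicator hms, setLIntegral_one, Measure.restrict_apply hms, Set.inter_comm]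
  rw [h1, n_step μ J hJmeas hJpos hJac n w _ ((measurable_const).indicator hms)]
  have h2 : ∀ x : ℕ → ℕ,
      (shiftMap^[n] ⁻¹' B).indicator (fun _ => (1:ENNReal)) (preMap w x)
          * (ENNReal.ofReal (jprod J n (preMap w x)))⁻¹
        = B.indicator (fun x => (ENNReal.ofReal (jprod J n (preMap w x)))⁻¹) x := by
    intro x
    have hmem : preMap w x ∈ shiftMap^[n] ⁻¹' B ↔ x ∈ B := by
      simp [Set.mem_preimage, shift_iter_pre]
    by_cases hx : x ∈ B
    · rw [Set.indicator_of_mem (hmem.2 hx), Set.indicator_of_mem hx, one_mul]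
    · rw [Set.indicator_of_notMem (fun h => hx (hmem.1 h)), Set.indicator_of_notMem hx,
        zero_mul]
  rw [lintegral_congr h2, lintegral_indicator hB]

lemma futureProj_shift2 (n : ℕ) (z : ℤ → ℕ) :
    futureProj (shiftMap2^[n] z) = shiftMap^[n] (futureProj z) := by
  funext m
  rw [shift_iter_apply]
  simp only [futureProj]
  rw [shift2_iter_apply]
  congr 1


lemma hat_cyl_measure (μ : Measure (ℕ → ℕ)) [IsProbabilityMeasure μ]
    (J : (ℕ → ℕ) → ℝ) (hJmeas : Measurable J) (hJpos : ∀ x, 0 < J x)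
    (hJac : ∀ (ι : ℕ) (B : Set (ℕ → ℕ)), MeasurableSet B →
      μ B = ∫⁻ x in {y : ℕ → ℕ | y 0 = ι} ∩ shiftMap ⁻¹' B, ENNReal.ofReal (J x) ∂μ)
    (μhat : Measure (ℤ → ℕ))
    (hinv2 : MeasurePreserving shiftMap2 μhat μhat)
    (hproj : Measure.map futureProj μhat = μ)
    (n : ℕ) (v : Fin n → ℕ) (B : Set (ℕ → ℕ)) (hB : MeasurableSet B) :
    Measure.map pastFuture μhat (cylSet v ×ˢ B)
      = ∫⁻ x in B, (ENNReal.ofReal (jprod J n (prependWord v x)))⁻¹ ∂μ := by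
  set w : Fin n → ℕ := fun j => v ⟨n - 1 - (j : ℕ), by omega⟩ with hwdef
  have hS : MeasurableSet (cylSet w ∩ shiftMap^[n] ⁻¹' B) :=
    (measurableSet_cylSet w).inter ((measurable_shiftMap.iterate n) hB)
  rw [Measure.map_apply measurable_pastFuture ((measurableSet_cylSet v).prod hB)]
  have hAmeas : MeasurableSet (pastFuture ⁻¹' (cylSet v ×ˢ B)) :=
    measurable_pastFuture ((measurableSet_cylSet v).prod hB)
  rw [← (hinv2.iterate n).measure_preimage hAmeas.nullMeasurableSet]
  have hsetEq : shiftMap2^[n] ⁻¹' (pastFuture ⁻¹' (cylSet v ×ˢ B))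
      = futureProj ⁻¹' (cylSet w ∩ shiftMap^[n] ⁻¹' B) := by
    ext z
    simp only [Set.mem_preimage, pastFuture, Set.mem_prod, Set.mem_inter_iff, cylSet,
      Set.mem_setOf_eq, pastProj, futureProj_shift2]
    constructor
    · rintro ⟨h1, h2⟩
      refine ⟨fun j => ?_, h2⟩
      have hj : (j : ℕ) < n := j.isLt
      have := h1 ⟨n - 1 - (j : ℕ), by omega⟩
      rw [shift2_iter_apply] at this
      simp only [futureProj, hwdef]
      simp only [Fin.val_mk] at this
      convert this using 2
      omega
    · rintro ⟨h1, h2⟩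
      refine ⟨fun k => ?_, h2⟩
      have hk : (k : ℕ) < n := k.isLt
      have := h1 ⟨n - 1 - (k : ℕ), by omega⟩
      simp only [futureProj, hwdef] at this
      rw [shift2_iter_apply]
      have hfin : (⟨n - 1 - (n - 1 - (k : ℕ)), by omega⟩ : Fin n) = k := by
        ext; simp; omega
      rw [hfin] at this
      convert this using 2
      omega
  rw [hsetEq]
  have : μhat (futureProj ⁻¹' (cylSet w ∩ shiftMap^[n] ⁻¹' B))
      = μ (cylSet w ∩ shiftMap^[n] ⁻¹' B) := by
    rw [← hproj, Measure.map_apply measurable_futureProj hS]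
  rw [this, cyl_shift_measure μ J hJmeas hJpos hJac n w B hB]
  apply lintegral_congr
  intro x
  rw [preMap_eq_prepend]

lemma measurable_prependWord {n : ℕ} (v : Fin n → ℕ) : Measurable (prependWord v) := by
  apply measurable_pi_lambda
  intro j
  unfold prependWord
  split
  · exact measurable_const
  · exact measurable_pi_apply _

lemma squeeze_lemma (μ : Measure (ℕ → ℕ)) [IsProbabilityMeasure μ]
    (F H : (ℕ → ℕ) → ENNReal) (hH : Measurable H)
    (hFH : ∀ B, MeasurableSet B → ∫⁻ x in B, F x ∂μ = ∫⁻ x in B, H x ∂μ)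
    (hHfin : ∀ B, MeasurableSet B → ∫⁻ x in B, H x ∂μ ≠ ⊤) :
    ∃ u, Measurable u ∧ u ≤ F ∧ u =ᵐ[μ] H := by
  obtain ⟨u, hum, hule, huint⟩ := exists_measurable_le_lintegral_eq μ F
  refine ⟨u, hum, hule, ?_⟩
  apply ae_eq_of_forall_setLIntegral_eq_of_sigmaFinite hum hH
  intro s hs _
  have h1 : ∫⁻ x in s, u x ∂μ ≤ ∫⁻ x in s, H x ∂μ := by
    rw [← hFH s hs]; exact lintegral_mono fun x => hule x
  have h2 : ∫⁻ x in sᶜ, u x ∂μ ≤ ∫⁻ x in sᶜ, H x ∂μ := by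
    rw [← hFH sᶜ hs.compl]; exact lintegral_mono fun x => hule x
  have hsum : ∫⁻ x in s, u x ∂μ + ∫⁻ x in sᶜ, u x ∂μ
      = ∫⁻ x in s, H x ∂μ + ∫⁻ x in sᶜ, H x ∂μ := by
    rw [lintegral_add_compl u hs, lintegral_add_compl H hs, ← huint]
    have := hFH Set.univ MeasurableSet.univ
    simpa [Measure.restrict_univ] using this
  refine le_antisymm h1 ?_
  have hcfin : ∫⁻ x in sᶜ, u x ∂μ ≠ ⊤ :=
    fun h => (hHfin sᶜ hs.compl) (top_le_iff.1 (h ▸ h2))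
  have : ∫⁻ x in s, H x ∂μ + ∫⁻ x in sᶜ, u x ∂μ
      ≤ ∫⁻ x in s, u x ∂μ + ∫⁻ x in sᶜ, u x ∂μ := by
    rw [hsum]
    exact add_le_add_right h2 _
  exact (ENNReal.add_le_add_iff_right hcfin).1 this


/-- **Lemma A.3.** Let `μ` be a shift-invariant probability on `ℕ^ℕ` with Jacobian `Jσ`,
and `μ̂` a shift-invariant lift on `ℕ^ℤ` with `P_*μ̂ = μ`. If `(μ̂_x)` is a disintegration
of `μ̂` over `μ` along `P`, then for `μ`-a.e. `x`, for every word `v` of length `n ≥ 1`,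
`μ̂_x([v]) = 1/Jσ^n(x^n)` where `x^n` prepends the reversal of `v` to `x`. -/
theorem stmt12 (μ : Measure (ℕ → ℕ)) [IsProbabilityMeasure μ]
    (hinv : MeasurePreserving shiftMap μ μ)
    (J : (ℕ → ℕ) → ℝ) (hJmeas : Measurable J) (hJpos : ∀ x, 0 < J x)
    (hJac : ∀ (ι : ℕ) (B : Set (ℕ → ℕ)), MeasurableSet B →
      μ B = ∫⁻ x in {y : ℕ → ℕ | y 0 = ι} ∩ shiftMap ⁻¹' B, ENNReal.ofReal (J x) ∂μ)
    (μhat : Measure (ℤ → ℕ)) [IsProbabilityMeasure μhat]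
    (hinv2 : MeasurePreserving shiftMap2 μhat μhat)
    (hproj : Measure.map futureProj μhat = μ)
    (ν : (ℕ → ℕ) → Measure (ℕ → ℕ)) (hνprob : ∀ x, IsProbabilityMeasure (ν x))
    (hdisint : ∀ E : Set ((ℕ → ℕ) × (ℕ → ℕ)), MeasurableSet E →
      Measure.map pastFuture μhat E = ∫⁻ x, ν x {s | (s, x) ∈ E} ∂μ) :
    ∀ᵐ x ∂μ, ∀ n : ℕ, 1 ≤ n → ∀ v : Fin n → ℕ,
      ν x {s : ℕ → ℕ | ∀ k : Fin n, s (k : ℕ) = v k}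
        = ENNReal.ofReal (1 / jprod J n (prependWord v x)) := by
  have key : ∀ (n : ℕ) (v : Fin n → ℕ), ∀ᵐ x ∂μ,
      ν x (cylSet v) = ENNReal.ofReal (1 / jprod J n (prependWord v x)) := by
    intro n v
    set G : (ℕ → ℕ) → ENNReal := fun x => (ENNReal.ofReal (jprod J n (prependWord v x)))⁻¹
      with hGdef
    have hGmeas : Measurable G := by
      apply Measurable.inv
      apply Measurable.ennreal_ofReal
      unfold jprod
      apply Finset.measurable_prod
      intro i _
      exact hJmeas.comp ((measurable_shiftMap.iterate i).comp (measurable_prependWord v))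
    set f : (ℕ → ℕ) → ENNReal := fun x => ν x (cylSet v) with hfdef
    have hf_le_one : ∀ x, f x ≤ 1 := by
      intro x; haveI := hνprob x; exact prob_le_one
    -- identity 1
    have hEq1 : ∀ B, MeasurableSet B → ∫⁻ x in B, f x ∂μ = ∫⁻ x in B, G x ∂μ := by
      intro B hB
      have hE := hdisint (cylSet v ×ˢ B) ((measurableSet_cylSet v).prod hB)
      rw [hat_cyl_measure μ J hJmeas hJpos hJac μhat hinv2 hproj n v B hB] at hE
      have hpt : ∀ x, ν x {s | (s, x) ∈ cylSet v ×ˢ B} = B.indicator f x := by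
        intro x
        by_cases hx : x ∈ B
        · have hset : {s | (s, x) ∈ cylSet v ×ˢ B} = cylSet v := by
            ext s; simp [Set.mem_prod, hx]
          rw [Set.indicator_of_mem hx, hset]
        · have hset : {s | (s, x) ∈ cylSet v ×ˢ B} = ∅ := by
            ext s; simp [Set.mem_prod, hx]
          rw [Set.indicator_of_notMem hx, hset, measure_empty]
      rw [lintegral_congr hpt, lintegral_indicator hB] at hE
      exact hE.symm
    -- identity 2
    haveI : IsProbabilityMeasure (Measure.map pastFuture μhat) :=
      Measure.isProbabilityMeasure_map measurable_pastFuture.aemeasurable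
    have hEq2 : ∀ B, MeasurableSet B →
        ∫⁻ x in B, (1 - f x) ∂μ = μ B - ∫⁻ x in B, G x ∂μ := by
      intro B hB
      have hE := hdisint ((cylSet v)ᶜ ×ˢ B) ((measurableSet_cylSet v).compl.prod hB)
      have hsplit : (cylSet v)ᶜ ×ˢ B = (Set.univ ×ˢ B) \ (cylSet v ×ˢ B) := by
        ext p; simp only [Set.mem_prod, Set.mem_diff, Set.mem_compl_iff, Set.mem_univ,
          true_and]
        tauto
      rw [hsplit, measure_diff (Set.prod_mono (Set.subset_univ _) subset_rfl)
        ((measurableSet_cylSet v).prod hB).nullMeasurableSet (measure_ne_top _ _)] at hE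
      have huniv : Measure.map pastFuture μhat (Set.univ ×ˢ B) = μ B := by
        rw [Measure.map_apply measurable_pastFuture (MeasurableSet.univ.prod hB)]
        have hpre : pastFuture ⁻¹' (Set.univ ×ˢ B) = futureProj ⁻¹' B := by
          ext z; simp [pastFuture]
        rw [hpre, ← Measure.map_apply measurable_futureProj hB, hproj]
      rw [huniv, hat_cyl_measure μ J hJmeas hJpos hJac μhat hinv2 hproj n v B hB] at hE
      have hpt : ∀ x, ν x {s | (s, x) ∈ Set.univ ×ˢ B \ cylSet v ×ˢ B}
          = B.indicator (fun x => 1 - f x) x := by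
        intro x
        by_cases hx : x ∈ B
        · have hset : {s | (s, x) ∈ Set.univ ×ˢ B \ cylSet v ×ˢ B} = (cylSet v)ᶜ := by
            ext s; simp [Set.mem_prod, hx]
          rw [Set.indicator_of_mem hx, hset]
          haveI := hνprob x
          rw [measure_compl (measurableSet_cylSet v) (measure_ne_top _ _)]
          simp [hfdef]
        · have hset : {s | (s, x) ∈ Set.univ ×ˢ B \ cylSet v ×ˢ B} = ∅ := by
            ext s; simp [Set.mem_prod, hx]
          rw [Set.indicator_of_notMem hx, hset, measure_empty]
      rw [lintegral_congr hpt, lintegral_indicator hB] at hE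
      exact hE.symm
    -- G ≤ 1 a.e.
    have hGle : G ≤ᵐ[μ] fun _ => (1 : ENNReal) := by
      apply ae_le_of_forall_setLIntegral_le_of_sigmaFinite hGmeas
      intro s hs _
      rw [← hEq1 s hs]
      calc ∫⁻ x in s, f x ∂μ ≤ ∫⁻ x in s, 1 ∂μ := lintegral_mono fun x => hf_le_one x
        _ = ∫⁻ x in s, (fun _ => (1:ENNReal)) x ∂μ := rfl
    set Gb : (ℕ → ℕ) → ENNReal := fun x => min (G x) 1 with hGbdef
    have hGbmeas : Measurable Gb := hGmeas.min measurable_const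
    have hGGb : G =ᵐ[μ] Gb := hGle.mono fun x hx => (min_eq_left hx).symm
    have hGbfin : ∀ B, MeasurableSet B → ∫⁻ x in B, Gb x ∂μ ≠ ⊤ := by
      intro B hB
      have : ∫⁻ x in B, Gb x ∂μ ≤ μ B := by
        calc ∫⁻ x in B, Gb x ∂μ ≤ ∫⁻ _ in B, 1 ∂μ := lintegral_mono fun x => min_le_right _ _
          _ = μ B := setLIntegral_one B
      exact fun h => (measure_ne_top μ B) (top_le_iff.1 (h ▸ this))
    have hEq1' : ∀ B, MeasurableSet B → ∫⁻ x in B, f x ∂μ = ∫⁻ x in B, Gb x ∂μ := by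
      intro B hB
      rw [hEq1 B hB]
      exact lintegral_congr_ae (ae_restrict_of_ae hGGb)
    have hEq2' : ∀ B, MeasurableSet B →
        ∫⁻ x in B, (1 - f x) ∂μ = ∫⁻ x in B, (1 - Gb x) ∂μ := by
      intro B hB
      have hadd : ∫⁻ x in B, (1 - Gb x) ∂μ + ∫⁻ x in B, Gb x ∂μ = μ B := by
        rw [← lintegral_add_right _ hGbmeas]
        have hone : ∀ x, (1 - Gb x) + Gb x = 1 := fun x => tsub_add_cancel_of_le (min_le_right _ _)
        calc ∫⁻ x in B, ((1 - Gb x) + Gb x) ∂μ = ∫⁻ _ in B, 1 ∂μ :=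
              lintegral_congr fun x => hone x
          _ = μ B := setLIntegral_one B
      rw [hEq2 B hB,
        show ∫⁻ x in B, G x ∂μ = ∫⁻ x in B, Gb x ∂μ from
          lintegral_congr_ae (ae_restrict_of_ae hGGb)]
      exact (ENNReal.eq_sub_of_add_eq (hGbfin B hB) hadd).symm
    obtain ⟨u, hum, hule, huae⟩ := squeeze_lemma μ f Gb hGbmeas hEq1' hGbfin
    have hGb2fin : ∀ B, MeasurableSet B → ∫⁻ x in B, (1 - Gb x) ∂μ ≠ ⊤ := by
      intro B hB
      have : ∫⁻ x in B, (1 - Gb x) ∂μ ≤ μ B := by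
        calc ∫⁻ x in B, (1 - Gb x) ∂μ ≤ ∫⁻ _ in B, 1 ∂μ := lintegral_mono fun x => tsub_le_self
          _ = μ B := setLIntegral_one B
      exact fun h => (measure_ne_top μ B) (top_le_iff.1 (h ▸ this))
    obtain ⟨u2, hu2m, hu2le, hu2ae⟩ := squeeze_lemma μ (fun x => 1 - f x) (fun x => 1 - Gb x)
      (measurable_const.sub hGbmeas) hEq2' hGb2fin
    filter_upwards [huae, hu2ae, hGGb] with x h1 h2 h3
    have e1 : Gb x ≤ f x := h1 ▸ hule x
    have e2 : (1:ENNReal) - Gb x ≤ 1 - f x := h2 ▸ hu2le x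
    have e3 : f x ≤ Gb x := by
      have h4 := tsub_le_tsub_left e2 (1 : ENNReal)
      rwa [ENNReal.sub_sub_cancel ENNReal.one_ne_top (hf_le_one x),
        ENNReal.sub_sub_cancel ENNReal.one_ne_top (min_le_right _ _)] at h4
    have hfG : f x = G x := by rw [le_antisymm e3 e1, ← h3]
    show f x = ENNReal.ofReal (1 / jprod J n (prependWord v x))
    rw [hfG, hGdef, one_div, ENNReal.ofReal_inv_of_pos (jprod_nonneg J hJpos n _)]
  have h2 : ∀ᵐ x ∂μ, ∀ (n : ℕ) (v : Fin n → ℕ),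
      ν x (cylSet v) = ENNReal.ofReal (1 / jprod J n (prependWord v x)) := by
    rw [ae_all_iff]
    intro n
    rw [ae_all_iff]
    intro v
    exact key n v
  filter_upwards [h2] with x hx
  intro n _ v
  exact hx n v
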